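/- For every periodic operator A, the sequence of eigenvalue counting functions F_n : ℝ → [0,1], F_n(λ) = 2^{−n}·#{i : λ_i ≤ λ} where λ_1,…,λ_{2^n} are the eigenvalues (with multiplicity) of the positive semidefinite matrix (A_n)ᴴ A_n, converges uniformly on ℝ as n → ∞. -/

import Mathlib

set_option linter.unusedSectionVars false
set_option linter.unusedVariables false
set_option maxHeartbeats 1000000

open Filter Topology Matrix

/-- A *periodic operator* is a function `A : ℤ × ℤ → ℂ` such that for some `n ≥ 1`,
`A(x,y) = 0` whenever `|x−y| > 2^n` and `A(x+2^n, y+2^n) = A(x,y)` for all `x, y ∈ ℤ`. -/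
def IsPeriodicOp (A : ℤ → ℤ → ℂ) : Prop :=
  ∃ n : ℕ, 1 ≤ n ∧ (∀ x y : ℤ, |x - y| > 2 ^ n → A x y = 0) ∧
    (∀ x y : ℤ, A (x + 2 ^ n) (y + 2 ^ n) = A x y)

/-- The truncation `A_n`, viewed as the `2^n × 2^n` matrix `(A(x,y))_{0 ≤ x,y ≤ 2^n−1}`. -/
noncomputable def trunc (A : ℤ → ℤ → ℂ) (n : ℕ) : Matrix (Fin (2 ^ n)) (Fin (2 ^ n)) ℂ :=
  fun i j => A ((i : ℕ) : ℤ) ((j : ℕ) : ℤ)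

/-- The eigenvalue counting function `F_n(λ) = 2^{−n}·#{i : λ_i ≤ λ}`, where
`λ_1, …, λ_{2^n}` are the eigenvalues (with multiplicity) of the positive semidefinite
matrix `(A_n)ᴴ A_n`. -/
noncomputable def countingFun (A : ℤ → ℤ → ℂ) (n : ℕ) (lam : ℝ) : ℝ :=
  (((Finset.univ : Finset (Fin (2 ^ n))).filter fun i =>
      (Matrix.isHermitian_conjTranspose_mul_self (trunc A n)).eigenvalues i ≤ lam).card : ℝ) / 2 ^ n


open Matrix Module

section Abstract
variable {ι : Type*} [Fintype ι] [DecidableEq ι]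

/-- quadratic form of a matrix -/
noncomputable def qf (M : Matrix ι ι ℂ) (x : ι → ℂ) : ℝ := (star x ⬝ᵥ M.mulVec x).re

noncomputable def nsq (x : ι → ℂ) : ℝ := (star x ⬝ᵥ x).re

lemma key {E : Type*} [AddCommGroup E] [Module ℂ E] [FiniteDimensional ℂ E]
    (q ns : E → ℝ) (lam : ℝ) (V W : Submodule ℂ E)
    (hV : ∀ x ∈ V, q x ≤ lam * ns x) (hW : ∀ x ∈ W, x ≠ 0 → lam * ns x < q x) :
    finrank ℂ V + finrank ℂ W ≤ finrank ℂ E := by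
  have hb : V ⊓ W = ⊥ := by
    rw [Submodule.eq_bot_iff]
    intro x hx
    by_contra hne
    exact absurd (hV x hx.1) (not_le.2 (hW x hx.2 hne))
  have := Submodule.finrank_sup_add_finrank_inf_eq V W
  rw [hb] at this
  simp only [finrank_bot, add_zero] at this
  rw [← this]
  exact Submodule.finrank_le _

/-- subspace of vectors supported on `S` -/
noncomputable def coordSub (S : Finset ι) : Submodule ℂ (ι → ℂ) where
  carrier := {x | ∀ i, i ∉ S → x i = 0}
  add_mem' := fun ha hb i hi => by simp [ha i hi, hb i hi]
  zero_mem' := fun i _ => rfl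
  smul_mem' := fun c x hx i hi => by simp [hx i hi]

lemma mem_coordSub {S : Finset ι} {x : ι → ℂ} : x ∈ coordSub S ↔ ∀ i, i ∉ S → x i = 0 :=
  Iff.rfl

noncomputable def coordSubEquiv (S : Finset ι) : coordSub S ≃ₗ[ℂ] (S → ℂ) where
  toFun x := fun i => x.1 i
  map_add' x y := rfl
  map_smul' c x := rfl
  invFun c := ⟨fun i => if h : i ∈ S then c ⟨i, h⟩ else 0, fun i hi => dif_neg hi⟩
  left_inv x := by
    ext i
    by_cases h : i ∈ S
    · simp [h]
    · simp [h, x.2 i h]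
  right_inv c := by ext i; simp

lemma finrank_coordSub (S : Finset ι) : finrank ℂ (coordSub S) = S.card := by
  rw [LinearEquiv.finrank_eq (coordSubEquiv S), Module.finrank_fintype_fun_eq_card]
  simp


variable {M : Matrix ι ι ℂ} (hM : M.IsHermitian)

/-- eigenvalue counting -/
noncomputable def cnt (hM : M.IsHermitian) (lam : ℝ) : ℕ :=
  (Finset.univ.filter fun i => hM.eigenvalues i ≤ lam).card

noncomputable def uEquiv (hM : M.IsHermitian) : (ι → ℂ) ≃ₗ[ℂ] (ι → ℂ) :=
  LinearEquiv.ofLinear (mulVecLin (hM.eigenvectorUnitary : Matrix ι ι ℂ))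
    (mulVecLin (star (hM.eigenvectorUnitary : Matrix ι ι ℂ)))
    (by rw [← mulVecLin_mul, ← Unitary.coe_star, Unitary.coe_mul_star_self, mulVecLin_one])
    (by rw [← mulVecLin_mul, Unitary.coe_star_mul_self, mulVecLin_one])

lemma uEquiv_apply (c : ι → ℂ) : uEquiv hM c = (hM.eigenvectorUnitary : Matrix ι ι ℂ) *ᵥ c := rfl

lemma conj_qf (P : Matrix ι ι ℂ) (c : ι → ℂ) :
    star (uEquiv hM c) ⬝ᵥ (P *ᵥ (uEquiv hM c)) =
      star c ⬝ᵥ ((star (hM.eigenvectorUnitary : Matrix ι ι ℂ) * P *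
        (hM.eigenvectorUnitary : Matrix ι ι ℂ)) *ᵥ c) := by
  rw [uEquiv_apply, star_mulVec, mulVec_mulVec, dotProduct_mulVec, vecMul_vecMul,
    ← dotProduct_mulVec, ← Matrix.star_eq_conjTranspose, Matrix.mul_assoc]

lemma diag_qf (t : ι → ℝ) (c : ι → ℂ) :
    (star c ⬝ᵥ ((diagonal fun i => (t i : ℂ)) *ᵥ c)).re = ∑ i, t i * Complex.normSq (c i) := by
  rw [dotProduct, Complex.re_sum]
  refine Finset.sum_congr rfl fun i _ => ?_
  rw [mulVec_diagonal]
  have : star c i * ((t i : ℂ) * c i) = (t i : ℂ) * ((Complex.normSq (c i) : ℝ) : ℂ) := by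
    simp only [Pi.star_apply, RCLike.star_def]
    rw [Complex.normSq_eq_conj_mul_self]; ring
  rw [this, ← Complex.ofReal_mul, Complex.ofReal_re]

lemma qf_uEquiv (c : ι → ℂ) :
    qf M (uEquiv hM c) = ∑ i, hM.eigenvalues i * Complex.normSq (c i) := by
  unfold qf
  have hd : star (hM.eigenvectorUnitary : Matrix ι ι ℂ) * M * (hM.eigenvectorUnitary : Matrix ι ι ℂ) =
      diagonal (RCLike.ofReal ∘ hM.eigenvalues) := by
    have := hM.conjStarAlgAut_star_eigenvectorUnitary
    rwa [Unitary.conjStarAlgAut_apply, Unitary.coe_star, star_star] at this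
  rw [conj_qf, hd]
  exact diag_qf (hM.eigenvalues) c

lemma nsq_uEquiv (c : ι → ℂ) : nsq (uEquiv hM c) = ∑ i, Complex.normSq (c i) := by
  unfold nsq
  have h := conj_qf hM 1 c
  rw [one_mulVec, Matrix.mul_one, Unitary.coe_star_mul_self, one_mulVec]
    at h
  rw [h]
  have := diag_qf (fun _ : ι => (1 : ℝ)) c
  simp only [Complex.ofReal_one, diagonal_one, one_mulVec, one_mul] at this
  exact this

end Abstract

section Spec
variable {ι : Type*} [Fintype ι] [DecidableEq ι] {M : Matrix ι ι ℂ} (hM : M.IsHermitian)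

noncomputable def specLe (hM : M.IsHermitian) (lam : ℝ) : Submodule ℂ (ι → ℂ) :=
  (coordSub (Finset.univ.filter fun i => hM.eigenvalues i ≤ lam)).map
    (uEquiv hM : (ι → ℂ) →ₗ[ℂ] (ι → ℂ))

noncomputable def specGt (hM : M.IsHermitian) (lam : ℝ) : Submodule ℂ (ι → ℂ) :=
  (coordSub (Finset.univ.filter fun i => ¬ hM.eigenvalues i ≤ lam)).map
    (uEquiv hM : (ι → ℂ) →ₗ[ℂ] (ι → ℂ))

lemma finrank_specLe (lam : ℝ) : finrank ℂ (specLe hM lam) = cnt hM lam := by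
  rw [specLe, LinearEquiv.finrank_map_eq, finrank_coordSub]; rfl

lemma finrank_specGt (lam : ℝ) :
    finrank ℂ (specGt hM lam) = Fintype.card ι - cnt hM lam := by
  rw [specGt, LinearEquiv.finrank_map_eq, finrank_coordSub]
  have := Finset.card_filter_add_card_filter_not
    (s := (Finset.univ : Finset ι)) (p := fun i => hM.eigenvalues i ≤ lam)
  simp only [Finset.card_univ] at this
  unfold cnt
  omega

lemma specLe_prop (lam : ℝ) : ∀ x ∈ specLe hM lam, qf M x ≤ lam * nsq x := by
  rintro x ⟨c, hc, rfl⟩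
  rw [LinearEquiv.coe_coe, qf_uEquiv, nsq_uEquiv, Finset.mul_sum]
  refine Finset.sum_le_sum fun i _ => ?_
  by_cases hi : hM.eigenvalues i ≤ lam
  · exact mul_le_mul_of_nonneg_right hi (Complex.normSq_nonneg _)
  · rw [hc i (by simp [hi])]
    simp

lemma specGt_prop (lam : ℝ) : ∀ x ∈ specGt hM lam, x ≠ 0 → lam * nsq x < qf M x := by
  rintro x ⟨c, hc, rfl⟩ hx
  have hc0 : c ≠ 0 := by
    rintro rfl
    simp at hx
  obtain ⟨i₀, hi₀⟩ := Function.ne_iff.mp hc0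
  have hi₀S : ¬ hM.eigenvalues i₀ ≤ lam := by
    by_contra h
    exact hi₀ (hc i₀ (by simp [h]))
  rw [LinearEquiv.coe_coe, qf_uEquiv, nsq_uEquiv, Finset.mul_sum]
  refine Finset.sum_lt_sum (fun i _ => ?_) ⟨i₀, Finset.mem_univ _, ?_⟩
  · by_cases hi : hM.eigenvalues i ≤ lam
    · rw [hc i (by simp [hi])]
      simp
    · exact mul_le_mul_of_nonneg_right (le_of_lt (not_le.mp hi)) (Complex.normSq_nonneg _)
  · exact mul_lt_mul_of_pos_right (not_le.mp hi₀S) (Complex.normSq_pos.mpr hi₀)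

lemma cnt_le_card (lam : ℝ) : cnt hM lam ≤ Fintype.card ι :=
  le_trans (Finset.card_filter_le _ _) (le_of_eq (Finset.card_univ))

/-- L1 -/
lemma finrank_le_cnt (lam : ℝ) (V : Submodule ℂ (ι → ℂ))
    (hV : ∀ x ∈ V, qf M x ≤ lam * nsq x) : finrank ℂ V ≤ cnt hM lam := by
  have h := key (qf M) nsq lam V (specGt hM lam) hV (specGt_prop hM lam)
  rw [finrank_specGt, Module.finrank_fintype_fun_eq_card] at h
  have h2 := cnt_le_card hM lam
  omega

/-- L2 -/
lemma finrank_le_cocnt (lam : ℝ) (W : Submodule ℂ (ι → ℂ))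
    (hW : ∀ x ∈ W, x ≠ 0 → lam * nsq x < qf M x) :
    finrank ℂ W ≤ Fintype.card ι - cnt hM lam := by
  have h := key (qf M) nsq lam (specLe hM lam) W (specLe_prop hM lam) hW
  rw [finrank_specLe, Module.finrank_fintype_fun_eq_card] at h
  omega

end Spec

section Perturb
variable {ι : Type*} [Fintype ι] [DecidableEq ι]

lemma qf_conjTranspose_mul_self (A : Matrix ι ι ℂ) (x : ι → ℂ) :
    qf (Aᴴ * A) x = nsq (A *ᵥ x) := by
  unfold qf nsq
  rw [← mulVec_mulVec, dotProduct_mulVec, ← star_mulVec]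

/-- the kernel of `A - B` is large if `A - B` has few nonzero rows -/
lemma finrank_ker_ge (D : Matrix ι ι ℂ) (S : Finset ι) (h : ∀ i ∉ S, ∀ j, D i j = 0) :
    Fintype.card ι - S.card ≤ finrank ℂ (LinearMap.ker D.mulVecLin) := by
  have hr : LinearMap.range D.mulVecLin ≤ coordSub S := by
    rintro _ ⟨x, rfl⟩ i hi
    simp only [mulVecLin_apply, mulVec, dotProduct]
    exact Finset.sum_eq_zero fun j _ => by rw [h i hi j, zero_mul]
  have h1 : finrank ℂ (LinearMap.range D.mulVecLin) ≤ S.card := by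
    rw [← finrank_coordSub S]
    exact Submodule.finrank_mono hr
  have h2 := LinearMap.finrank_range_add_finrank_ker D.mulVecLin
  rw [Module.finrank_fintype_fun_eq_card] at h2
  omega

/-- eigenvalue counting under perturbation of small rank -/
lemma cnt_perturb (A B : Matrix ι ι ℂ) (lam : ℝ) (S : Finset ι)
    (h : ∀ i ∉ S, ∀ j, (A - B) i j = 0) :
    cnt (isHermitian_conjTranspose_mul_self A) lam ≤
      cnt (isHermitian_conjTranspose_mul_self B) lam + S.card := by
  have hprop : ∀ x ∈ specLe (isHermitian_conjTranspose_mul_self A) lam ⊓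
      LinearMap.ker (A - B).mulVecLin, qf (Bᴴ * B) x ≤ lam * nsq x := by
    rintro x ⟨hx1, hx2⟩
    have hAB : A *ᵥ x = B *ᵥ x := by
      have h0 : (A - B) *ᵥ x = 0 := hx2
      rw [sub_mulVec] at h0
      exact sub_eq_zero.mp h0
    have h1 := specLe_prop (isHermitian_conjTranspose_mul_self A) lam x hx1
    rw [qf_conjTranspose_mul_self] at h1 ⊢
    rw [← hAB]
    exact h1
  have hL1 := finrank_le_cnt (isHermitian_conjTranspose_mul_self B) lam _ hprop
  have hker := finrank_ker_ge (A - B) S h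
  have hsum := Submodule.finrank_sup_add_finrank_inf_eq
    (specLe (isHermitian_conjTranspose_mul_self A) lam) (LinearMap.ker (A - B).mulVecLin)
  have hsup : finrank ℂ ↥(specLe (isHermitian_conjTranspose_mul_self A) lam ⊔
      LinearMap.ker (A - B).mulVecLin) ≤ Fintype.card ι := by
    rw [← Module.finrank_fintype_fun_eq_card ℂ (η := ι)]
    exact Submodule.finrank_le _
  rw [finrank_specLe] at hsum
  omega

end Perturb

section Reindex
variable {ι κ : Type*} [Fintype ι] [DecidableEq ι] [Fintype κ] [DecidableEq κ]

noncomputable def compEquiv (e : κ ≃ ι) : (ι → ℂ) ≃ₗ[ℂ] (κ → ℂ) where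
  toFun x := x ∘ e
  invFun y := y ∘ e.symm
  map_add' x y := rfl
  map_smul' c x := rfl
  left_inv x := by ext i; simp
  right_inv y := by ext i; simp

lemma dot_comp (e : κ ≃ ι) (u v : ι → ℂ) : (u ∘ e) ⬝ᵥ (v ∘ e) = u ⬝ᵥ v :=
  Fintype.sum_equiv e _ _ (fun _ => rfl)

lemma qf_submatrix (M : Matrix ι ι ℂ) (e : κ ≃ ι) (x : ι → ℂ) :
    qf (M.submatrix e e) (x ∘ e) = qf M x := by
  unfold qf
  have h1 : M.submatrix (e : κ → ι) e *ᵥ (x ∘ e) = (M *ᵥ x) ∘ e := by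
    have hxe : (x ∘ e) ∘ e.symm = x := by ext i; simp
    rw [submatrix_mulVec_equiv, hxe]
  rw [h1]
  have h2 : star (x ∘ e) = (star x) ∘ e := rfl
  rw [h2, dot_comp]

lemma nsq_comp (e : κ ≃ ι) (x : ι → ℂ) : nsq (x ∘ e) = nsq x := by
  unfold nsq
  have h2 : star (x ∘ e) = (star x) ∘ e := rfl
  rw [h2, dot_comp]

lemma cnt_submatrix (M : Matrix ι ι ℂ) (hM : M.IsHermitian) (e : κ ≃ ι) (lam : ℝ) :
    cnt (hM.submatrix e) lam = cnt hM lam := by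
  have hcard : Fintype.card κ = Fintype.card ι := Fintype.card_congr e
  -- first inequality : cnt sub ≤ cnt M
  have h1 : cnt (hM.submatrix e) lam ≤ cnt hM lam := by
    have hV : ∀ x ∈ Submodule.map ((compEquiv e).symm : (κ → ℂ) →ₗ[ℂ] (ι → ℂ))
        (specLe (hM.submatrix e) lam), qf M x ≤ lam * nsq x := by
      rintro x ⟨y, hy, rfl⟩
      have hx : ((compEquiv e).symm y : ι → ℂ) ∘ e = y := by
        ext i; simp [compEquiv]
      have := specLe_prop (hM.submatrix e) lam y hy
      rw [← hx, qf_submatrix, nsq_comp] at this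
      exact this
    have := finrank_le_cnt hM lam _ hV
    rwa [LinearEquiv.finrank_map_eq, finrank_specLe] at this
  -- second inequality
  have h2 : cnt hM lam ≤ cnt (hM.submatrix e) lam := by
    have hW : ∀ x ∈ Submodule.map ((compEquiv e).symm : (κ → ℂ) →ₗ[ℂ] (ι → ℂ))
        (specGt (hM.submatrix e) lam), x ≠ 0 → lam * nsq x < qf M x := by
      rintro x ⟨y, hy, rfl⟩ hne
      have hy0 : y ≠ 0 := by
        rintro rfl; simp at hne
      have hx : ((compEquiv e).symm y : ι → ℂ) ∘ e = y := by
        ext i; simp [compEquiv]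
      have := specGt_prop (hM.submatrix e) lam y hy hy0
      rw [← hx, qf_submatrix, nsq_comp] at this
      exact this
    have := finrank_le_cocnt hM lam _ hW
    rw [LinearEquiv.finrank_map_eq, finrank_specGt] at this
    have hc1 := cnt_le_card (hM.submatrix e) lam
    have hc2 := cnt_le_card hM lam
    omega
  omega

end Reindex

section Blocks
variable {ι κ : Type*} [Fintype ι] [DecidableEq ι] [Fintype κ] [DecidableEq κ]

noncomputable def sumEquiv : ((ι ⊕ κ) → ℂ) ≃ₗ[ℂ] (ι → ℂ) × (κ → ℂ) where
  toFun z := (z ∘ Sum.inl, z ∘ Sum.inr)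
  invFun p := Sum.elim p.1 p.2
  map_add' _ _ := rfl
  map_smul' _ _ := rfl
  left_inv z := Sum.elim_comp_inl_inr z
  right_inv p := rfl

lemma star_sum_elim (u : ι → ℂ) (v : κ → ℂ) :
    star (Sum.elim u v) = Sum.elim (star u) (star v) := by
  funext i; cases i <;> rfl

lemma qf_blocks (M₁ : Matrix ι ι ℂ) (M₂ : Matrix κ κ ℂ) (z : ι ⊕ κ → ℂ) :
    qf (fromBlocks M₁ 0 0 M₂) z = qf M₁ (z ∘ Sum.inl) + qf M₂ (z ∘ Sum.inr) := by
  unfold qf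
  conv_lhs => rw [← Sum.elim_comp_inl_inr z]
  rw [fromBlocks_mulVec, star_sum_elim, zero_mulVec, zero_mulVec, add_zero, zero_add,
    sumElim_dotProduct_sumElim, Complex.add_re, Sum.elim_comp_inl, Sum.elim_comp_inr]

lemma nsq_blocks (z : ι ⊕ κ → ℂ) : nsq z = nsq (z ∘ Sum.inl) + nsq (z ∘ Sum.inr) := by
  unfold nsq
  conv_lhs => rw [← Sum.elim_comp_inl_inr z]
  rw [star_sum_elim, sumElim_dotProduct_sumElim, Complex.add_re]

lemma qf_zero (M : Matrix ι ι ℂ) : qf M 0 = 0 := by simp [qf]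

lemma nsq_zero : nsq (0 : ι → ℂ) = 0 := by simp [nsq]

noncomputable def prodSubEquiv {E F : Type*} [AddCommGroup E] [AddCommGroup F]
    [Module ℂ E] [Module ℂ F] (p : Submodule ℂ E) (q : Submodule ℂ F) :
    ↥(p.prod q) ≃ₗ[ℂ] ↥p × ↥q where
  toFun z := (⟨z.1.1, z.2.1⟩, ⟨z.1.2, z.2.2⟩)
  invFun w := ⟨(w.1.1, w.2.1), ⟨w.1.2, w.2.2⟩⟩
  map_add' _ _ := rfl
  map_smul' _ _ := rfl
  left_inv _ := rfl
  right_inv _ := rfl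

lemma finrank_prodSub {E F : Type*} [AddCommGroup E] [AddCommGroup F]
    [Module ℂ E] [Module ℂ F] [FiniteDimensional ℂ E] [FiniteDimensional ℂ F]
    (p : Submodule ℂ E) (q : Submodule ℂ F) :
    finrank ℂ ↥(p.prod q) = finrank ℂ ↥p + finrank ℂ ↥q := by
  rw [LinearEquiv.finrank_eq (prodSubEquiv p q), Module.finrank_prod]

lemma cnt_blocks {M₁ : Matrix ι ι ℂ} {M₂ : Matrix κ κ ℂ}
    (h1 : M₁.IsHermitian) (h2 : M₂.IsHermitian)
    (hD : (fromBlocks M₁ 0 0 M₂).IsHermitian) (lam : ℝ) :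
    cnt hD lam = cnt h1 lam + cnt h2 lam := by
  have hcard : Fintype.card (ι ⊕ κ) = Fintype.card ι + Fintype.card κ := Fintype.card_sum
  have hg1 : cnt h1 lam + cnt h2 lam ≤ cnt hD lam := by
    have hV : ∀ x ∈ Submodule.map ((sumEquiv (ι := ι) (κ := κ)).symm :
        ((ι → ℂ) × (κ → ℂ)) →ₗ[ℂ] ((ι ⊕ κ) → ℂ)) ((specLe h1 lam).prod (specLe h2 lam)),
        qf (fromBlocks M₁ 0 0 M₂) x ≤ lam * nsq x := by
      rintro x ⟨y, hy, rfl⟩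
      show qf (fromBlocks M₁ 0 0 M₂) (Sum.elim y.1 y.2) ≤ lam * nsq (Sum.elim y.1 y.2)
      rw [qf_blocks, nsq_blocks, Sum.elim_comp_inl, Sum.elim_comp_inr, mul_add]
      exact add_le_add (specLe_prop h1 lam y.1 hy.1) (specLe_prop h2 lam y.2 hy.2)
    have := finrank_le_cnt hD lam _ hV
    rwa [LinearEquiv.finrank_map_eq, finrank_prodSub, finrank_specLe, finrank_specLe] at this
  have hg2 : cnt hD lam ≤ cnt h1 lam + cnt h2 lam := by
    have hW : ∀ x ∈ Submodule.map ((sumEquiv (ι := ι) (κ := κ)).symm :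
        ((ι → ℂ) × (κ → ℂ)) →ₗ[ℂ] ((ι ⊕ κ) → ℂ)) ((specGt h1 lam).prod (specGt h2 lam)),
        x ≠ 0 → lam * nsq x < qf (fromBlocks M₁ 0 0 M₂) x := by
      rintro x ⟨y, hy, rfl⟩ hne
      have hy0 : y ≠ 0 := by rintro rfl; simp at hne
      show lam * nsq (Sum.elim y.1 y.2) < qf (fromBlocks M₁ 0 0 M₂) (Sum.elim y.1 y.2)
      rw [qf_blocks, nsq_blocks, Sum.elim_comp_inl, Sum.elim_comp_inr, mul_add]
      have hcase : y.1 ≠ 0 ∨ y.2 ≠ 0 := by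
        by_contra h
        push_neg at h
        exact hy0 (Prod.ext h.1 h.2)
      rcases hcase with hc | hc
      · refine add_lt_add_of_lt_of_le (specGt_prop h1 lam y.1 hy.1 hc) ?_
        by_cases h0 : y.2 = 0
        · rw [h0, qf_zero, nsq_zero, mul_zero]
        · exact le_of_lt (specGt_prop h2 lam y.2 hy.2 h0)
      · refine add_lt_add_of_le_of_lt ?_ (specGt_prop h2 lam y.2 hy.2 hc)
        by_cases h0 : y.1 = 0
        · rw [h0, qf_zero, nsq_zero, mul_zero]
        · exact le_of_lt (specGt_prop h1 lam y.1 hy.1 h0)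
    have := finrank_le_cocnt hD lam _ hW
    rw [LinearEquiv.finrank_map_eq, finrank_prodSub, finrank_specGt, finrank_specGt] at this
    have hc1 := cnt_le_card h1 lam
    have hc2 := cnt_le_card h2 lam
    have hcD := cnt_le_card hD lam
    omega
  omega

end Blocks

section Application

lemma cnt_congr {ι : Type*} [Fintype ι] [DecidableEq ι] {M N : Matrix ι ι ℂ}
    (hM : M.IsHermitian) (hN : N.IsHermitian) (h : M = N) (lam : ℝ) :
    cnt hM lam = cnt hN lam := by subst h; rfl

lemma step_bound (A : ℤ → ℤ → ℂ) (m : ℕ)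
    (hband : ∀ x y : ℤ, |x - y| > 2 ^ m → A x y = 0)
    (hper : ∀ x y : ℤ, A (x + 2 ^ m) (y + 2 ^ m) = A x y)
    (n : ℕ) (hn : m ≤ n) (lam : ℝ) :
    cnt (isHermitian_conjTranspose_mul_self (trunc A (n + 1))) lam ≤
        2 * cnt (isHermitian_conjTranspose_mul_self (trunc A n)) lam + 2 ^ (m + 1) ∧
      2 * cnt (isHermitian_conjTranspose_mul_self (trunc A n)) lam ≤
        cnt (isHermitian_conjTranspose_mul_self (trunc A (n + 1))) lam + 2 ^ (m + 1) := by
  -- iterated periodicity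
  have hperk : ∀ (k : ℕ) (x y : ℤ), A (x + 2 ^ m * k) (y + 2 ^ m * k) = A x y := by
    intro k
    induction k with
    | zero => simp
    | succ k ih =>
      intro x y
      have hx : x + 2 ^ m * (k + 1 : ℕ) = (x + 2 ^ m * k) + 2 ^ m := by push_cast; ring
      have hy : y + 2 ^ m * (k + 1 : ℕ) = (y + 2 ^ m * k) + 2 ^ m := by push_cast; ring
      rw [hx, hy, hper, ih]
  have hperP : ∀ x y : ℤ, A (x + 2 ^ n) (y + 2 ^ n) = A x y := by
    intro x y
    have h2n : (2 : ℤ) ^ n = 2 ^ m * (2 ^ (n - m) : ℕ) := by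
      push_cast
      rw [← pow_add]
      congr 1
      omega
    rw [h2n]
    exact hperk _ x y
  have hWP : 2 ^ m ≤ 2 ^ n := Nat.pow_le_pow_right (by norm_num) hn
  have hW1 : 1 ≤ 2 ^ m := Nat.one_le_two_pow
  have h2P : 2 ^ (n + 1) = 2 ^ n + 2 ^ n := by rw [pow_succ]; omega
  have h2W : 2 ^ (m + 1) = 2 ^ m + 2 ^ m := by rw [pow_succ]; omega
  have hcm : ((2 ^ m : ℕ) : ℤ) = 2 ^ m := by push_cast; ring
  have hcn : ((2 ^ n : ℕ) : ℤ) = 2 ^ n := by push_cast; ring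
  set W := 2 ^ m with hWdef
  set P := 2 ^ n with hPdef
  clear_value W
  -- the reindexing equivalence
  let e : Fin (2 ^ (n + 1)) ≃ (Fin P ⊕ Fin P) :=
    (finCongr h2P).trans finSumFinEquiv.symm
  have he_lo : ∀ (i : Fin (2 ^ (n + 1))) (hi : (i : ℕ) < P),
      e i = Sum.inl ⟨(i : ℕ), hi⟩ := by
    intro i hi
    have h : finCongr h2P i = finSumFinEquiv (Sum.inl (⟨(i : ℕ), hi⟩ : Fin P)) := by
      rw [finSumFinEquiv_apply_left]
      apply Fin.ext
      simp
    simp only [e, Equiv.trans_apply, h, Equiv.symm_apply_apply]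
  have he_hi : ∀ (i : Fin (2 ^ (n + 1))) (hi : P ≤ (i : ℕ)),
      e i = Sum.inr ⟨(i : ℕ) - P, by have := i.2; omega⟩ := by
    intro i hi
    have h : finCongr h2P i = finSumFinEquiv
        (Sum.inr (⟨(i : ℕ) - P, by have := i.2; omega⟩ : Fin P)) := by
      rw [finSumFinEquiv_apply_right]
      apply Fin.ext
      simp only [finCongr_apply, Fin.coe_cast, Fin.natAdd_mk]
      omega
    simp only [e, Equiv.trans_apply, h, Equiv.symm_apply_apply]
  set T := trunc A n with hT
  set B := (fromBlocks T 0 0 T).submatrix e e with hB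
  set S : Finset (Fin (2 ^ (n + 1))) :=
    Finset.univ.filter (fun i => P - W ≤ (i : ℕ) ∧ (i : ℕ) < P + W) with hS
  have hcardS : S.card ≤ 2 ^ (m + 1) := by
    have h1 : S.card ≤ (Finset.range (2 ^ (m + 1))).card := by
      refine Finset.card_le_card_of_injOn (fun i => (i : ℕ) - (P - W)) ?_ ?_
      · intro i hi
        simp only [hS, Finset.mem_coe, Finset.mem_filter] at hi
        simp only [Finset.mem_coe, Finset.mem_range]
        show (i : ℕ) - (P - W) < 2 ^ (m + 1)
        omega
      · intro i hi j hj hij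
        have hi' : P - W ≤ (i : ℕ) ∧ (i : ℕ) < P + W := by
          simpa [hS] using hi
        have hj' : P - W ≤ (j : ℕ) ∧ (j : ℕ) < P + W := by
          simpa [hS] using hj
        have hij' : (i : ℕ) - (P - W) = (j : ℕ) - (P - W) := hij
        apply Fin.ext
        omega
    rwa [Finset.card_range] at h1
  -- support of the difference
  have hsupp : ∀ i ∉ S, ∀ j, (trunc A (n + 1) - B) i j = 0 := by
    intro i hiS j
    simp only [hS, Finset.mem_filter, Finset.mem_univ, true_and, not_and, not_lt] at hiS
    have hi2 : (i : ℕ) < P + P := by have := i.2; omega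
    have hj2 : (j : ℕ) < P + P := by have := j.2; omega
    rw [Matrix.sub_apply]
    by_cases hiP : (i : ℕ) < P
    · by_cases hjP : (j : ℕ) < P
      · -- both in the first block
        rw [hB, Matrix.submatrix_apply, he_lo i hiP, he_lo j hjP]
        simp only [fromBlocks_apply₁₁]
        rw [hT, trunc, trunc]
        simp only [sub_self]
      · -- i low, j high : both terms vanish
        push_neg at hjP
        have hiW : (i : ℕ) < P - W := by
          by_contra h
          push_neg at h
          have := hiS h
          omega
        rw [hB, Matrix.submatrix_apply, he_lo i hiP, he_hi j hjP]
        simp only [fromBlocks_apply₁₂, Matrix.zero_apply]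
        rw [trunc]
        rw [hband _ _ ?_, sub_zero]
        rw [abs_sub_comm, abs_of_nonneg (by omega)]
        omega
    · push_neg at hiP
      by_cases hjP : (j : ℕ) < P
      · -- i high, j low
        have hiW : P + W ≤ (i : ℕ) := hiS (by omega)
        rw [hB, Matrix.submatrix_apply, he_hi i hiP, he_lo j hjP]
        simp only [fromBlocks_apply₂₁, Matrix.zero_apply]
        rw [trunc]
        rw [hband _ _ ?_, sub_zero]
        rw [abs_of_nonneg (by omega)]
        omega
      · -- both in the second block : periodicity
        push_neg at hjP
        rw [hB, Matrix.submatrix_apply, he_hi i hiP, he_hi j hjP]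
        simp only [fromBlocks_apply₂₂]
        rw [hT, trunc, trunc]
        simp only
        have hci : (((i : ℕ) - P : ℕ) : ℤ) = ((i : ℕ) : ℤ) - 2 ^ n := by omega
        have hcj : (((j : ℕ) - P : ℕ) : ℤ) = ((j : ℕ) : ℤ) - 2 ^ n := by omega
        rw [hci, hcj]
        have h2 := hperP (((i : ℕ) : ℤ) - 2 ^ n) (((j : ℕ) : ℤ) - 2 ^ n)
        have e1 : ((i : ℕ) : ℤ) - (2:ℤ) ^ n + (2:ℤ) ^ n = ((i : ℕ) : ℤ) := by ring
        have e2 : ((j : ℕ) : ℤ) - (2:ℤ) ^ n + (2:ℤ) ^ n = ((j : ℕ) : ℤ) := by ring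
        rw [e1, e2] at h2
        rw [h2, sub_self]
  have hsupp' : ∀ i ∉ S, ∀ j, (B - trunc A (n + 1)) i j = 0 := by
    intro i hi j
    have h := hsupp i hi j
    rw [Matrix.sub_apply] at h ⊢
    rw [sub_eq_zero] at h ⊢
    exact h.symm
  -- counting for the block diagonal matrix
  have hTh : (Tᴴ * T).IsHermitian := isHermitian_conjTranspose_mul_self T
  have hDD : (fromBlocks (Tᴴ * T) 0 0 (Tᴴ * T)).IsHermitian :=
    isHermitian_fromBlocks_iff.mpr ⟨hTh, by simp, by simp, hTh⟩
  have hBeq : Bᴴ * B = (fromBlocks (Tᴴ * T) 0 0 (Tᴴ * T)).submatrix e e := by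
    rw [hB, conjTranspose_submatrix, submatrix_mul_equiv, fromBlocks_conjTranspose,
      fromBlocks_multiply]
    simp
  have hchain : cnt (isHermitian_conjTranspose_mul_self B) lam =
      2 * cnt (isHermitian_conjTranspose_mul_self T) lam := by
    rw [cnt_congr (isHermitian_conjTranspose_mul_self B) (hDD.submatrix e) hBeq lam,
      cnt_submatrix _ hDD e lam, cnt_blocks hTh hTh hDD lam]
    have h : cnt hTh lam = cnt (isHermitian_conjTranspose_mul_self T) lam := rfl
    omega
  have d1 := cnt_perturb (trunc A (n + 1)) B lam S hsupp
  have d2 := cnt_perturb B (trunc A (n + 1)) lam S hsupp'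
  rw [hchain] at d1 d2
  constructor <;> omega

end Application

lemma countingFun_eq (A : ℤ → ℤ → ℂ) (n : ℕ) (lam : ℝ) :
    countingFun A n lam =
      (cnt (isHermitian_conjTranspose_mul_self (trunc A n)) lam : ℝ) / 2 ^ n := rfl

lemma countingFun_nonneg (A : ℤ → ℤ → ℂ) (n : ℕ) (lam : ℝ) : 0 ≤ countingFun A n lam := by
  rw [countingFun_eq]; positivity

lemma countingFun_le_one (A : ℤ → ℤ → ℂ) (n : ℕ) (lam : ℝ) : countingFun A n lam ≤ 1 := by
  rw [countingFun_eq, div_le_one (by positivity)]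
  have h := cnt_le_card (isHermitian_conjTranspose_mul_self (trunc A n)) lam
  rw [Fintype.card_fin] at h
  exact_mod_cast h


/-- for every periodic operator `A`, the eigenvalue counting functions
`F_n` of the matrices `(A_n)ᴴ A_n` converge uniformly on ℝ as `n → ∞`. -/
theorem stmt18 (A : ℤ → ℤ → ℂ) (hA : IsPeriodicOp A) :
    ∃ F : ℝ → ℝ, TendstoUniformly (fun n : ℕ => countingFun A n) F Filter.atTop := by
  obtain ⟨m, hm1, hband, hper⟩ := hA
  set C : ℝ := 2 ^ (m + 1) with hC
  have hC1 : (1 : ℝ) ≤ C := by rw [hC]; exact one_le_pow₀ (by norm_num)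
  have hC0 : (0 : ℝ) ≤ C := by linarith
  -- one step bound
  have hstep : ∀ n, m ≤ n → ∀ lam,
      |countingFun A (n + 1) lam - countingFun A n lam| ≤ C / 2 ^ (n + 1) := by
    intro n hn lam
    obtain ⟨h1, h2⟩ := step_bound A m hband hper n hn lam
    have h1' : (cnt (isHermitian_conjTranspose_mul_self (trunc A (n + 1))) lam : ℝ) ≤
        2 * (cnt (isHermitian_conjTranspose_mul_self (trunc A n)) lam : ℝ) + C := by
      rw [hC]; exact_mod_cast h1
    have h2' : 2 * (cnt (isHermitian_conjTranspose_mul_self (trunc A n)) lam : ℝ) ≤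
        (cnt (isHermitian_conjTranspose_mul_self (trunc A (n + 1))) lam : ℝ) + C := by
      rw [hC]; exact_mod_cast h2
    have hkey : |(cnt (isHermitian_conjTranspose_mul_self (trunc A (n + 1))) lam : ℝ) -
        2 * (cnt (isHermitian_conjTranspose_mul_self (trunc A n)) lam : ℝ)| ≤ C := by
      rw [abs_le]; constructor <;> linarith
    have hdiff : countingFun A (n + 1) lam - countingFun A n lam =
        ((cnt (isHermitian_conjTranspose_mul_self (trunc A (n + 1))) lam : ℝ) -
          2 * (cnt (isHermitian_conjTranspose_mul_self (trunc A n)) lam : ℝ)) / 2 ^ (n + 1) := by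
      rw [countingFun_eq, countingFun_eq,
        show ((2 : ℝ) ^ (n + 1) : ℝ) = 2 ^ n * 2 from pow_succ 2 n]
      have hz : (2 : ℝ) ^ n ≠ 0 := by positivity
      field_simp
    rw [hdiff, abs_div, abs_of_pos (by positivity : (0:ℝ) < 2 ^ (n + 1))]
    gcongr
  -- telescoping bound
  have htel : ∀ n, m ≤ n → ∀ k lam,
      |countingFun A (n + k) lam - countingFun A n lam| ≤ C / 2 ^ n - C / 2 ^ (n + k) := by
    intro n hn k
    induction k with
    | zero => intro lam; simp
    | succ k ih =>
      intro lam
      have hh := hstep (n + k) (le_trans hn (Nat.le_add_right n k)) lam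
      have habs := abs_sub_le (countingFun A (n + k + 1) lam) (countingFun A (n + k) lam)
        (countingFun A n lam)
      have hhh := ih lam
      have harith : C / 2 ^ (n + k + 1) + (C / 2 ^ n - C / 2 ^ (n + k)) =
          C / 2 ^ n - C / 2 ^ (n + k + 1) := by
        rw [pow_succ]
        have hz : (2 : ℝ) ^ (n + k) ≠ 0 := by positivity
        field_simp
        ring
      have : |countingFun A (n + (k + 1)) lam - countingFun A n lam| ≤
          C / 2 ^ (n + k + 1) + (C / 2 ^ n - C / 2 ^ (n + k)) := by
        have he : n + (k + 1) = n + k + 1 := by omega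
        rw [he]
        exact le_trans habs (add_le_add hh hhh)
      rw [harith] at this
      have he2 : n + k + 1 = n + (k + 1) := by omega
      rw [he2] at this
      exact this
  have hb : ∀ n, m ≤ n → ∀ k lam,
      |countingFun A (n + k) lam - countingFun A n lam| ≤ C / 2 ^ n := by
    intro n hn k lam
    have h := htel n hn k lam
    have : (0 : ℝ) ≤ C / 2 ^ (n + k) := by positivity
    linarith
  -- the comparison for arbitrary pairs
  have hpair : ∀ N n n', N ≤ n → N ≤ n' → ∀ lam,
      dist (countingFun A n lam) (countingFun A n' lam) ≤ C * 2 ^ m / 2 ^ N := by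
    have haux : ∀ N n n', N ≤ n → n ≤ n' → ∀ lam,
        dist (countingFun A n' lam) (countingFun A n lam) ≤ C * 2 ^ m / 2 ^ N := by
      intro N n n' hNn hnn' lam
      obtain ⟨k, rfl⟩ := Nat.exists_eq_add_of_le hnn'
      have hm2 : (1 : ℝ) ≤ 2 ^ m := one_le_pow₀ (by norm_num)
      by_cases hmn : m ≤ n
      · have h := hb n hmn k lam
        rw [Real.dist_eq]
        refine le_trans h ?_
        have s1 : (2 : ℝ) ^ N ≤ 2 ^ n := by
          gcongr
          norm_num
        exact div_le_div₀ (by positivity) (le_mul_of_one_le_right hC0 hm2) (by positivity) s1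
      · -- n < m : use the trivial bound 1
        push_neg at hmn
        have hd : dist (countingFun A (n + k) lam) (countingFun A n lam) ≤ 1 := by
          rw [Real.dist_eq, abs_le]
          have := countingFun_nonneg A (n + k) lam
          have := countingFun_le_one A (n + k) lam
          have := countingFun_nonneg A n lam
          have := countingFun_le_one A n lam
          constructor <;> linarith
        refine le_trans hd ?_
        rw [le_div_iff₀ (by positivity)]
        have hNm : N ≤ m := by omega
        have h2N : (2 : ℝ) ^ N ≤ 2 ^ m := by
          gcongr
          norm_num
        have h2m : (2 : ℝ) ^ m ≤ C * 2 ^ m :=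
          le_mul_of_one_le_left (by positivity) hC1
        linarith
    intro N n n' hNn hNn' lam
    rcases le_total n n' with h | h
    · rw [dist_comm]; exact haux N n n' hNn h lam
    · exact haux N n' n hNn' h lam
  -- Cauchy, hence pointwise limits
  have htend0 : Tendsto (fun N : ℕ => C * 2 ^ m / 2 ^ N) atTop (nhds 0) := by
    have h : Tendsto (fun N : ℕ => (C * 2 ^ m) * (1 / 2 : ℝ) ^ N) atTop (nhds ((C * 2 ^ m) * 0)) :=
      (tendsto_pow_atTop_nhds_zero_of_lt_one (by norm_num) (by norm_num)).const_mul _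
    rw [mul_zero] at h
    convert h using 2 with N
    rw [div_pow, one_pow]
    ring
  have hex : ∀ lam : ℝ, ∃ L, Tendsto (fun n => countingFun A n lam) atTop (nhds L) := by
    intro lam
    have hcs : CauchySeq (fun n => countingFun A n lam) :=
      cauchySeq_of_le_tendsto_0 _ (fun n n' N hn hn' => hpair N n n' hn hn' lam) htend0
    exact cauchySeq_tendsto_of_complete hcs
  choose F hF using hex
  refine ⟨F, ?_⟩
  rw [Metric.tendstoUniformly_iff]
  intro eps heps
  obtain ⟨n₁, hn₁⟩ := (((htend0.comp (tendsto_id (α := ℕ))).eventually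
    (gt_mem_nhds heps)).and (eventually_ge_atTop m)).exists
  filter_upwards [eventually_ge_atTop n₁] with n hn lam
  have hmn : m ≤ n := le_trans hn₁.2 hn
  have hlim : dist (F lam) (countingFun A n lam) ≤ C / 2 ^ n := by
    have htt : Tendsto (fun k => dist (countingFun A (n + k) lam) (countingFun A n lam))
        atTop (nhds (dist (F lam) (countingFun A n lam))) := by
      apply Tendsto.dist ?_ tendsto_const_nhds
      have h1 := (hF lam).comp (tendsto_add_atTop_nat n)
      have : (fun k => countingFun A (k + n) lam) = fun k => countingFun A (n + k) lam := by
        funext k; rw [Nat.add_comm]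
      rwa [Function.comp_def, this] at h1
    refine le_of_tendsto htt ?_
    filter_upwards with k
    rw [Real.dist_eq]
    exact hb n hmn k lam
  have hC2 : C / 2 ^ n ≤ C * 2 ^ m / 2 ^ n₁ := by
    have hm2 : (1 : ℝ) ≤ 2 ^ m := one_le_pow₀ (by norm_num)
    have h2n : (2 : ℝ) ^ n₁ ≤ 2 ^ n := by
      gcongr
      norm_num
    exact div_le_div₀ (by positivity) (le_mul_of_one_le_right hC0 hm2) (by positivity) h2n
  have := hn₁.1
  simp only [Function.comp, id] at this
  calc dist (F lam) (countingFun A n lam) ≤ C / 2 ^ n := hlim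
    _ ≤ C * 2 ^ m / 2 ^ n₁ := hC2
    _ < eps := this
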